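/- Let f : ℕ → ℝ be given by f(k) = λ₂k² + λ₁k + λ₀ with f(k) ≥ 0 for all k ≥ 1. If √(f(2k)) ≤ √(f(k)) + 2√k for all k ≥ 1, then λ₂ ≤ 0 (hence λ₂ = 0 if additionally λ₂ ≥ 0). -/
import Mathlib


/-- A nonnegative quadratic `f(k) = λ₂k² + λ₁k + λ₀` on positive integers
satisfying `√(f(2k)) ≤ √(f(k)) + 2√k` has `λ₂ ≤ 0`. -/
theorem quadratic_doubling_le (f : ℕ → ℝ) (l2 l1 l0 : ℝ)
    (hf : ∀ k : ℕ, f k = l2 * (k : ℝ) ^ 2 + l1 * (k : ℝ) + l0)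
    (hnonneg : ∀ k : ℕ, 1 ≤ k → 0 ≤ f k)
    (hdbl : ∀ k : ℕ, 1 ≤ k → Real.sqrt (f (2 * k)) ≤ Real.sqrt (f k) + 2 * Real.sqrt k) :
    l2 ≤ 0 := by
  by_contra hl2
  push_neg at hl2
  set M := |l2| + |l1| + |l0| with hM
  have hM0 : 0 ≤ M := by positivity
  set B := 4 * Real.sqrt M + 4 + |l1| with hB
  have hMs : 0 ≤ Real.sqrt M := Real.sqrt_nonneg _
  have key : ∀ k : ℕ, 1 ≤ k → 3 * l2 * Real.sqrt k ≤ B := by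
    intro k hk
    have hk1 : (1:ℝ) ≤ (k:ℝ) := by exact_mod_cast hk
    have hk0 : (0:ℝ) < (k:ℝ) := by linarith
    have hfnn : 0 ≤ f k := hnonneg k hk
    have h2k : 1 ≤ 2 * k := by omega
    have hf2nn : 0 ≤ f (2 * k) := hnonneg _ h2k
    set s := Real.sqrt (k:ℝ) with hs
    set F := Real.sqrt (f k) with hF
    have hks : (k:ℝ) = s ^ 2 := (Real.sq_sqrt hk0.le).symm
    have hs0 : (0:ℝ) ≤ s := Real.sqrt_nonneg _
    have hs1 : 1 ≤ s := by
      rw [hs, show (1:ℝ) = Real.sqrt 1 from Real.sqrt_one.symm]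
      exact Real.sqrt_le_sqrt hk1
    have hfub : f k ≤ M * (k:ℝ) ^ 2 := by
      rw [hf]
      have h1 : l2 ≤ |l2| := le_abs_self _
      have h2 : l1 ≤ |l1| := le_abs_self _
      have h3 : l0 ≤ |l0| := le_abs_self _
      have h3' : 0 ≤ |l0| := abs_nonneg _
      have h2' : 0 ≤ |l1| := abs_nonneg _
      nlinarith [sq_nonneg ((k:ℝ) - 1)]
    have hsfk : F ≤ Real.sqrt M * (k:ℝ) := by
      have h := Real.sqrt_le_sqrt hfub
      rwa [Real.sqrt_mul hM0, Real.sqrt_sq hk0.le] at h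
    have hsfk0 : 0 ≤ F := Real.sqrt_nonneg _
    have hsq : f (2 * k) ≤ (F + 2 * s) ^ 2 := by
      calc f (2 * k) = (Real.sqrt (f (2 * k))) ^ 2 := (Real.sq_sqrt hf2nn).symm
        _ ≤ (F + 2 * s) ^ 2 := by
            apply pow_le_pow_left₀ (Real.sqrt_nonneg _) (hdbl k hk)
    have h1 : F ^ 2 = f k := Real.sq_sqrt hfnn
    have h2 : s ^ 2 = (k:ℝ) := Real.sq_sqrt hk0.le
    have hexp : (F + 2 * s) ^ 2 = f k + 4 * F * s + 4 * (k:ℝ) := by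
      rw [show (F + 2 * s) ^ 2 = F ^ 2 + 4 * F * s + 4 * s ^ 2 from by ring, h1, h2]
    have hmain : f (2 * k) ≤ f k + 4 * F * s + 4 * (k:ℝ) := hexp ▸ hsq
    rw [hf (2 * k), hf k] at hmain
    push_cast at hmain
    -- hmain : l2 * (2*k)^2 + l1*(2*k) + l0 ≤ l2*k^2 + l1*k + l0 + 4*F*s + 4*k
    have hl1 : -|l1| ≤ l1 := neg_abs_le _
    have hFs : F * s ≤ Real.sqrt M * s ^ 2 * s := by
      have := mul_le_mul_of_nonneg_right hsfk hs0
      rwa [hks] at this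
    have hss : s ^ 2 ≤ s ^ 3 := by nlinarith
    have hgoal : (3 * l2 * s) * s ^ 3 ≤ B * s ^ 3 := by
      rw [hks] at hmain
      nlinarith [mul_le_mul_of_nonneg_left hss (abs_nonneg l1)]
    have hs3 : (0:ℝ) < s ^ 3 := by positivity
    exact le_of_mul_le_mul_right hgoal hs3
  obtain ⟨n, hn⟩ := exists_nat_gt ((B / (3 * l2)) ^ 2 + 1)
  have hn1 : 1 ≤ n := by
    rcases Nat.eq_zero_or_pos n with h | h
    · subst h; norm_num at hn; nlinarith [sq_nonneg (B / (3 * l2))]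
    · exact h
  have h1 := key n hn1
  have hsn : B / (3 * l2) < Real.sqrt n := by
    have h2 : Real.sqrt ((B / (3 * l2)) ^ 2) < Real.sqrt n :=
      Real.sqrt_lt_sqrt (by positivity) (by linarith)
    calc B / (3 * l2) ≤ |B / (3 * l2)| := le_abs_self _
      _ = Real.sqrt ((B / (3 * l2)) ^ 2) := (Real.sqrt_sq_eq_abs _).symm
      _ < _ := h2
  rw [div_lt_iff₀ (by linarith : (0:ℝ) < 3 * l2)] at hsn
  nlinarith [hsn, h1]
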